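/- Removing a matched maximal pair preserves stability: if (i,j) attains the maximum of the injective utility matrix 𝔘 and μ is a stable matching for 𝔘, then μ restricted to (U \ {i}) × (N \ {j}) is a stable matching for the restricted utility matrix. -/

import Mathlib

/-- Removing a matched maximal pair preserves stability: if `(i, j)` attains
the maximum of the injective utility matrix `𝔘` and `μ` is a stable matching
for `𝔘` (quotas 1, preferences of both sides induced by `𝔘`), then the
restriction of `μ` to `(U \ {i}) × (N \ {j})` is a stable matching for the
restricted utility matrix. -/
theorem stmt_9 {U N : Type*} [Fintype U] [Fintype N] [DecidableEq U] [DecidableEq N]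
    (𝔘 : U → N → ℝ) (i : U) (j : N)
    (hinj : Function.Injective (fun p : U × N => 𝔘 p.1 p.2))
    (hmax : ∀ u n, (u, n) ≠ (i, j) → 𝔘 u n < 𝔘 i j)
    (μ : U → Option N)
    (hmatch : ∀ u u' n, μ u = some n → μ u' = some n → u = u')
    (hstable : ¬ ∃ (u : U) (n : N),
      (μ u = none ∨ ∃ n', μ u = some n' ∧ 𝔘 u n' < 𝔘 u n) ∧
      ((∀ u', μ u' ≠ some n) ∨ ∃ u', μ u' = some n ∧ 𝔘 u' n < 𝔘 u n)) :
    -- the restricted matching on `U \ {i}` and `N \ {j}`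
    ∀ μ' : {u : U // u ≠ i} → Option {n : N // n ≠ j},
      (μ' = fun u => (μ u.1).bind (fun n => if h : n = j then none else some ⟨n, h⟩)) →
      (∀ u u' n, μ' u = some n → μ' u' = some n → u = u') ∧
      ¬ ∃ (u : {u : U // u ≠ i}) (n : {n : N // n ≠ j}),
          (μ' u = none ∨ ∃ n', μ' u = some n' ∧ 𝔘 u.1 n'.1 < 𝔘 u.1 n.1) ∧
          ((∀ u', μ' u' ≠ some n) ∨ ∃ u', μ' u' = some n ∧ 𝔘 u'.1 n.1 < 𝔘 u.1 n.1) := by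
  intro μ' hμ'
  subst hμ'
  -- Step 1: stability forces `μ i = some j`.
  have hij : μ i = some j := by
    by_contra h
    apply hstable
    refine ⟨i, j, ?_, ?_⟩
    · cases hmi : μ i with
      | none => exact Or.inl rfl
      | some n' =>
        refine Or.inr ⟨n', rfl, hmax i n' ?_⟩
        intro he
        injection he with h1 h2
        exact h (h2 ▸ hmi)
    · by_cases hc : ∃ u', μ u' = some j
      · obtain ⟨u', hu'⟩ := hc
        have hne : u' ≠ i := fun e => h (e ▸ hu')
        exact Or.inr ⟨u', hu', hmax u' j (by simp [hne])⟩
      · exact Or.inl fun u' hu => hc ⟨u', hu⟩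
  -- characterization of the restricted matching
  have key : ∀ (u : {u : U // u ≠ i}) (n : {n : N // n ≠ j}),
      ((μ u.1).bind (fun n => if h : n = j then none else some ⟨n, h⟩) = some n) ↔
      μ u.1 = some n.1 := by
    intro u n
    constructor
    · intro h
      obtain ⟨a, ha, hb⟩ := Option.bind_eq_some_iff.mp h
      by_cases haj : a = j
      · simp [haj] at hb
      · simp [haj] at hb
        rw [ha, ← hb]
    · intro h
      have hnj : n.1 ≠ j := n.2
      simp [h, hnj]
  constructor
  · intro u u' n h1 h2
    have := hmatch u.1 u'.1 n.1 ((key u n).mp h1) ((key u' n).mp h2)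
    exact Subtype.ext this
  · rintro ⟨u, n, h1, h2⟩
    apply hstable
    refine ⟨u.1, n.1, ?_, ?_⟩
    · rcases h1 with h1 | ⟨n', hn', hlt⟩
      · left
        cases hmu : μ u.1 with
        | none => rfl
        | some a =>
          exfalso
          by_cases haj : a = j
          · exact u.2 (hmatch u.1 i j (haj ▸ hmu) hij)
          · simp [hmu, haj] at h1
      · exact Or.inr ⟨n'.1, (key u n').mp hn', hlt⟩
    · rcases h2 with h2 | ⟨u', hu', hlt⟩
      · left
        intro u' hu'
        have hne : u' ≠ i := by
          intro e; subst e; rw [hij] at hu'; exact n.2 (Option.some.inj hu').symm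
        exact h2 ⟨u', hne⟩ ((key ⟨u', hne⟩ n).mpr hu')
      · exact Or.inr ⟨u'.1, (key u' n).mp hu', hlt⟩
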